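/- Change of variables for line-to-point integrals through the foot of the perpendicular: for σ > 0 and a ≤ z ≤ b, ∫_a^b f(√(σ²+(z−z')²)) dz' = ∫_σ^{r₂} 2 f(r) r/√(r²−σ²) dr + ∫_{r₂}^{r₃} f(r) r/√(r²−σ²) dr, where r₂ = min(√(σ²+(z−a)²), √(σ²+(z−b)²)) and r₃ = max(√(σ²+(z−a)²), √(σ²+(z−b)²)). -/

import Mathlib

open Real MeasureTheory Set intervalIntegral

private lemma stmt10_hderiv (σ : ℝ) (hσ : 0 < σ) (u : ℝ) :
    HasDerivAt (fun u : ℝ => Real.sqrt (σ ^ 2 + u ^ 2)) (u / Real.sqrt (σ ^ 2 + u ^ 2)) u := by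
  have hpos : 0 < σ ^ 2 + u ^ 2 := by positivity
  have h1 : HasDerivAt (fun u : ℝ => σ ^ 2 + u ^ 2) (2 * u) u := by
    simpa using (hasDerivAt_pow 2 u).const_add (σ ^ 2)
  have h2 := (Real.hasDerivAt_sqrt hpos.ne').comp u h1
  convert h2 using 1
  · rfl
  · rfl
  · rfl
  have : Real.sqrt (σ ^ 2 + u ^ 2) ≠ 0 := by positivity
  field_simp

private lemma stmt10_himage (σ : ℝ) (hσ : 0 < σ) (L : ℝ) (hL : 0 ≤ L) :
    (fun u : ℝ => Real.sqrt (σ ^ 2 + u ^ 2)) '' Ioc 0 L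
      = Ioc σ (Real.sqrt (σ ^ 2 + L ^ 2)) := by
  ext r
  constructor
  · rintro ⟨u, ⟨hu0, huL⟩, rfl⟩
    constructor
    · have : σ ^ 2 < σ ^ 2 + u ^ 2 := by nlinarith
      calc σ = Real.sqrt (σ ^ 2) := by rw [Real.sqrt_sq hσ.le]
        _ < _ := Real.sqrt_lt_sqrt (by positivity) this
    · exact Real.sqrt_le_sqrt (by nlinarith)
  · rintro ⟨hr1, hr2⟩
    refine ⟨Real.sqrt (r ^ 2 - σ ^ 2), ⟨?_, ?_⟩, ?_⟩
    · exact Real.sqrt_pos.mpr (by nlinarith)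
    · have h2 : r ^ 2 ≤ σ ^ 2 + L ^ 2 := by
        have := Real.sq_sqrt (show (0:ℝ) ≤ σ ^ 2 + L ^ 2 by positivity)
        nlinarith [Real.sqrt_nonneg (σ^2+L^2), hr2]
      calc Real.sqrt (r ^ 2 - σ ^ 2) ≤ Real.sqrt (L ^ 2) := Real.sqrt_le_sqrt (by nlinarith)
        _ = L := Real.sqrt_sq hL
    · show Real.sqrt (σ ^ 2 + Real.sqrt (r ^ 2 - σ ^ 2) ^ 2) = r
      rw [Real.sq_sqrt (by nlinarith : (0:ℝ) ≤ r ^ 2 - σ ^ 2)]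
      have : σ ^ 2 + (r ^ 2 - σ ^ 2) = r ^ 2 := by ring
      rw [this, Real.sqrt_sq (by linarith)]

private lemma stmt10_hinj (σ : ℝ) (hσ : 0 < σ) {L : ℝ} :
    InjOn (fun u : ℝ => Real.sqrt (σ ^ 2 + u ^ 2)) (Ioc (0:ℝ) L) := by
  intro x hx y hy h
  have hx' : 0 < σ ^ 2 + x ^ 2 := by positivity
  have hy' : 0 < σ ^ 2 + y ^ 2 := by positivity
  have := congrArg (fun t => t ^ 2) h
  simp only [Real.sq_sqrt hx'.le, Real.sq_sqrt hy'.le] at this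
  have : x ^ 2 = y ^ 2 := by linarith
  nlinarith [hx.1, hy.1]

private lemma stmt10_hpt (σ : ℝ) (hσ : 0 < σ) (f : ℝ → ℝ) {L : ℝ} {u : ℝ}
    (hu : u ∈ Ioc (0:ℝ) L) :
    |u / Real.sqrt (σ ^ 2 + u ^ 2)| •
      (f (Real.sqrt (σ ^ 2 + u ^ 2)) * Real.sqrt (σ ^ 2 + u ^ 2) /
        Real.sqrt (Real.sqrt (σ ^ 2 + u ^ 2) ^ 2 - σ ^ 2)) = f (Real.sqrt (σ ^ 2 + u ^ 2)) := by
  have hu0 : 0 < u := hu.1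
  have hpos : (0:ℝ) < σ ^ 2 + u ^ 2 := by positivity
  have hs : Real.sqrt (σ ^ 2 + u ^ 2) ^ 2 = σ ^ 2 + u ^ 2 := Real.sq_sqrt hpos.le
  rw [hs]
  have : σ ^ 2 + u ^ 2 - σ ^ 2 = u ^ 2 := by ring
  rw [this, Real.sqrt_sq hu0.le]
  have h1 : Real.sqrt (σ ^ 2 + u ^ 2) ≠ 0 := by positivity
  rw [abs_of_nonneg (by positivity), smul_eq_mul]
  field_simp

private lemma stmt10_key (σ : ℝ) (hσ : 0 < σ) (f : ℝ → ℝ) (L : ℝ) (hL : 0 ≤ L) :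
    ∫ u in (0:ℝ)..L, f (Real.sqrt (σ ^ 2 + u ^ 2)) =
      ∫ r in σ..Real.sqrt (σ ^ 2 + L ^ 2),
        f r * r / Real.sqrt (r ^ 2 - σ ^ 2) := by
  have hσR : σ ≤ Real.sqrt (σ ^ 2 + L ^ 2) := by
    nlinarith [Real.sq_sqrt (show (0:ℝ) ≤ σ ^ 2 + L ^ 2 by positivity),
      Real.sqrt_nonneg (σ ^ 2 + L ^ 2)]
  have hder : ∀ u ∈ Ioc (0:ℝ) L,
      HasDerivWithinAt (fun u : ℝ => Real.sqrt (σ ^ 2 + u ^ 2))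
        (u / Real.sqrt (σ ^ 2 + u ^ 2)) (Ioc (0:ℝ) L) u :=
    fun u _ => (stmt10_hderiv σ hσ u).hasDerivWithinAt
  have := integral_image_eq_integral_abs_deriv_smul measurableSet_Ioc hder (stmt10_hinj σ hσ)
    (fun r => f r * r / Real.sqrt (r ^ 2 - σ ^ 2))
  rw [stmt10_himage σ hσ L hL] at this
  rw [intervalIntegral.integral_of_le hσR, intervalIntegral.integral_of_le hL, this]
  exact setIntegral_congr_fun measurableSet_Ioc (fun u hu => (stmt10_hpt σ hσ f hu).symm)

private lemma stmt10_keyInt (σ : ℝ) (hσ : 0 < σ) (f : ℝ → ℝ) (hf : Continuous f)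
    (L : ℝ) (hL : 0 ≤ L) :
    IntervalIntegrable (fun r => f r * r / Real.sqrt (r ^ 2 - σ ^ 2)) volume
      σ (Real.sqrt (σ ^ 2 + L ^ 2)) := by
  have hσR : σ ≤ Real.sqrt (σ ^ 2 + L ^ 2) := by
    nlinarith [Real.sq_sqrt (show (0:ℝ) ≤ σ ^ 2 + L ^ 2 by positivity),
      Real.sqrt_nonneg (σ ^ 2 + L ^ 2)]
  rw [intervalIntegrable_iff_integrableOn_Ioc_of_le hσR]
  have hder : ∀ u ∈ Ioc (0:ℝ) L,
      HasDerivWithinAt (fun u : ℝ => Real.sqrt (σ ^ 2 + u ^ 2))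
        (u / Real.sqrt (σ ^ 2 + u ^ 2)) (Ioc (0:ℝ) L) u :=
    fun u _ => (stmt10_hderiv σ hσ u).hasDerivWithinAt
  rw [← stmt10_himage σ hσ L hL]
  rw [integrableOn_image_iff_integrableOn_abs_deriv_smul measurableSet_Ioc hder
    (stmt10_hinj σ hσ)]
  have : IntegrableOn (fun u => f (Real.sqrt (σ ^ 2 + u ^ 2))) (Ioc (0:ℝ) L) :=
    (hf.comp (by continuity)).integrableOn_Ioc
  exact this.congr_fun (fun u hu => (stmt10_hpt σ hσ f hu).symm) measurableSet_Ioc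

theorem stmt_10 (σ z a b : ℝ) (hσ : 0 < σ) (haz : a ≤ z) (hzb : z ≤ b)
    (f : ℝ → ℝ) (hf : Continuous f) :
    ∫ z' in a..b, f (Real.sqrt (σ ^ 2 + (z - z') ^ 2)) =
      (∫ r in σ..(min (Real.sqrt (σ ^ 2 + (z - a) ^ 2)) (Real.sqrt (σ ^ 2 + (z - b) ^ 2))),
        2 * f r * r / Real.sqrt (r ^ 2 - σ ^ 2)) +
      ∫ r in (min (Real.sqrt (σ ^ 2 + (z - a) ^ 2)) (Real.sqrt (σ ^ 2 + (z - b) ^ 2)))..(max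
          (Real.sqrt (σ ^ 2 + (z - a) ^ 2)) (Real.sqrt (σ ^ 2 + (z - b) ^ 2))),
        f r * r / Real.sqrt (r ^ 2 - σ ^ 2) := by
  set g : ℝ → ℝ := fun r => f r * r / Real.sqrt (r ^ 2 - σ ^ 2) with hg
  have hcont : Continuous fun z' : ℝ => f (Real.sqrt (σ ^ 2 + (z - z') ^ 2)) :=
    hf.comp (by continuity)
  -- split LHS at z
  have hsplit : (∫ z' in a..b, f (Real.sqrt (σ ^ 2 + (z - z') ^ 2))) =
      (∫ z' in a..z, f (Real.sqrt (σ ^ 2 + (z - z') ^ 2))) +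
      ∫ z' in z..b, f (Real.sqrt (σ ^ 2 + (z - z') ^ 2)) :=
    (intervalIntegral.integral_add_adjacent_intervals
      (hcont.intervalIntegrable a z) (hcont.intervalIntegrable z b)).symm
  have h1 : (∫ z' in a..z, f (Real.sqrt (σ ^ 2 + (z - z') ^ 2))) =
      ∫ u in (0:ℝ)..(z - a), f (Real.sqrt (σ ^ 2 + u ^ 2)) := by
    rw [intervalIntegral.integral_comp_sub_left
      (fun u => f (Real.sqrt (σ ^ 2 + u ^ 2))) z, sub_self]
  have h2 : (∫ z' in z..b, f (Real.sqrt (σ ^ 2 + (z - z') ^ 2))) =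
      ∫ u in (0:ℝ)..(b - z), f (Real.sqrt (σ ^ 2 + u ^ 2)) := by
    have : (∫ z' in z..b, f (Real.sqrt (σ ^ 2 + (z - z') ^ 2))) =
        ∫ z' in z..b, f (Real.sqrt (σ ^ 2 + (z' - z) ^ 2)) := by
      apply intervalIntegral.integral_congr
      intro x _
      show f (Real.sqrt (σ ^ 2 + (z - x) ^ 2)) = f (Real.sqrt (σ ^ 2 + (x - z) ^ 2))
      rw [show (z - x) ^ 2 = (x - z) ^ 2 by ring]
    rw [this, intervalIntegral.integral_comp_sub_right
      (fun u => f (Real.sqrt (σ ^ 2 + u ^ 2))) z, sub_self]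
  have hza : (0:ℝ) ≤ z - a := by linarith
  have hbz : (0:ℝ) ≤ b - z := by linarith
  have hba : Real.sqrt (σ ^ 2 + (b - z) ^ 2) = Real.sqrt (σ ^ 2 + (z - b) ^ 2) := by
    rw [show (b - z) ^ 2 = (z - b) ^ 2 by ring]
  have hza' : Real.sqrt (σ ^ 2 + (z - a) ^ 2) = Real.sqrt (σ ^ 2 + (z - a) ^ 2) := rfl
  have hk1 := stmt10_key σ hσ f (z - a) hza
  have hk2 := stmt10_key σ hσ f (b - z) hbz
  rw [hba] at hk2
  have hI1 : IntervalIntegrable g volume σ (Real.sqrt (σ ^ 2 + (z - a) ^ 2)) :=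
    stmt10_keyInt σ hσ f hf (z - a) hza
  have hI2 : IntervalIntegrable g volume σ (Real.sqrt (σ ^ 2 + (z - b) ^ 2)) := by
    have := stmt10_keyInt σ hσ f hf (b - z) hbz
    rwa [hba] at this
  have hσa : σ ≤ Real.sqrt (σ ^ 2 + (z - a) ^ 2) := by
    nlinarith [Real.sq_sqrt (show (0:ℝ) ≤ σ ^ 2 + (z - a) ^ 2 by positivity),
      Real.sqrt_nonneg (σ ^ 2 + (z - a) ^ 2)]
  have hσb : σ ≤ Real.sqrt (σ ^ 2 + (z - b) ^ 2) := by
    nlinarith [Real.sq_sqrt (show (0:ℝ) ≤ σ ^ 2 + (z - b) ^ 2 by positivity),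
      Real.sqrt_nonneg (σ ^ 2 + (z - b) ^ 2)]
  -- rewrite first RHS integrand
  have h2g : (∫ r in σ..(min (Real.sqrt (σ ^ 2 + (z - a) ^ 2))
      (Real.sqrt (σ ^ 2 + (z - b) ^ 2))), 2 * f r * r / Real.sqrt (r ^ 2 - σ ^ 2)) =
      2 * ∫ r in σ..(min (Real.sqrt (σ ^ 2 + (z - a) ^ 2))
      (Real.sqrt (σ ^ 2 + (z - b) ^ 2))), g r := by
    rw [← intervalIntegral.integral_const_mul]
    apply intervalIntegral.integral_congr
    intro x _
    simp only [hg]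
    ring
  rw [hsplit, h1, h2, hk1, hk2, h2g]
  rcases le_total (Real.sqrt (σ ^ 2 + (z - a) ^ 2)) (Real.sqrt (σ ^ 2 + (z - b) ^ 2)) with
    hc | hc
  · rw [min_eq_left hc, max_eq_right hc]
    have hI3 : IntervalIntegrable g volume (Real.sqrt (σ ^ 2 + (z - a) ^ 2))
        (Real.sqrt (σ ^ 2 + (z - b) ^ 2)) :=
      hI2.mono_set (uIcc_subset_uIcc (by rw [Set.mem_uIcc]; left; exact ⟨hσa, hc⟩)
        (by rw [Set.mem_uIcc]; left; exact ⟨hσb, le_refl _⟩))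
    rw [← intervalIntegral.integral_add_adjacent_intervals hI1 hI3]
    ring
  · rw [min_eq_right hc, max_eq_left hc]
    have hI3 : IntervalIntegrable g volume (Real.sqrt (σ ^ 2 + (z - b) ^ 2))
        (Real.sqrt (σ ^ 2 + (z - a) ^ 2)) :=
      hI1.mono_set (uIcc_subset_uIcc (by rw [Set.mem_uIcc]; left; exact ⟨hσb, hc⟩)
        (by rw [Set.mem_uIcc]; left; exact ⟨hσa, le_refl _⟩))
    rw [← intervalIntegral.integral_add_adjacent_intervals hI2 hI3]
    ring
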